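/- The set C := {n : ℕ | the theory Th(M_n) is consistent}, i.e. {n : ℕ | the set of ring sentences {φ | encode φ ∈ W_n} is satisfiable}, is not computable (it is not a ComputablePred). -/

import Mathlib

open FirstOrder Language

/-- Sentences of the language of rings are countable. -/
instance : Countable (Σ n, Language.ring.BoundedFormula Empty n) :=
  Language.BoundedFormula.listEncode_sigma_injective.countable

instance : Countable Language.ring.Sentence :=
  Function.Injective.countable
    (f := fun φ : Language.ring.Sentence =>
      (⟨0, φ⟩ : Σ n, Language.ring.BoundedFormula Empty n))
    (fun _ _ h => by simpa using h)

/-- Gödel numbering of ring sentences. -/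
noncomputable instance : Encodable Language.ring.Sentence :=
  Encodable.ofCountable _

/-- `W e` is the domain of the `e`-th partial computable function: the `e`-th
computably enumerable set. -/
def W (e : ℕ) : Set ℕ := {x : ℕ | ((Denumerable.ofNat Nat.Partrec.Code e).eval x).Dom}

/-- `ThM e` is the theory (set of ring sentences) produced by the `e`-th Turing machine. -/
noncomputable def ThM (e : ℕ) : Language.ring.Theory :=
  {φ : Language.ring.Sentence | Encodable.encode φ ∈ W e}

/-- The set `C = {n | Th(M n) is consistent}` is not computable. -/
theorem stmt_3 :
    ¬ ComputablePred (fun n : ℕ => (ThM n).IsSatisfiable) := by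
  classical
  intro h
  set b := Encodable.encode (⊥ : Language.ring.Sentence) with hb
  -- the auxiliary partial function
  have hg : Nat.Partrec (fun p : ℕ =>
      if p.unpair.2 = b then
        Nat.Partrec.Code.eval (Denumerable.ofNat Nat.Partrec.Code p.unpair.1) 0
      else Part.none) := by
    have := Partrec.cond
      (c := fun p : ℕ => decide (p.unpair.2 = b))
      (f := fun p : ℕ =>
        Nat.Partrec.Code.eval (Denumerable.ofNat Nat.Partrec.Code p.unpair.1) 0)
      (g := fun _ : ℕ => (Part.none : Part ℕ))
      ((Primrec.eq.comp (Primrec.snd.comp Primrec.unpair) (Primrec.const b)).decide.to_comp)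
      (Nat.Partrec.Code.eval_part.comp
        ((Computable.ofNat _).comp (Computable.fst.comp Computable.unpair))
        (Computable.const 0))
      Partrec.none
    refine Partrec.nat_iff.1 (this.of_eq fun p => ?_)
    by_cases hp : p.unpair.2 = b <;> simp [hp]
  obtain ⟨c₀, hc₀⟩ := Nat.Partrec.Code.exists_code.1 hg
  -- the reduction function
  let F : Nat.Partrec.Code → ℕ := fun c =>
    Encodable.encode (Nat.Partrec.Code.curry c₀ (Encodable.encode c))
  have hF : Computable F :=
    Computable.encode.comp
      ((Nat.Partrec.Code.primrec₂_curry.to_comp.comp (Computable.const c₀)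
        Computable.encode) : Computable _)
  -- key equivalence
  have key : ∀ c : Nat.Partrec.Code,
      (ThM (F c)).IsSatisfiable ↔ ¬ (c.eval 0).Dom := by
    intro c
    have hmem : ∀ φ : Language.ring.Sentence,
        (φ ∈ ThM (F c)) ↔ (φ = ⊥ ∧ (c.eval 0).Dom) := by
      intro φ
      have : (Denumerable.ofNat Nat.Partrec.Code (F c)) =
          Nat.Partrec.Code.curry c₀ (Encodable.encode c) :=
        Denumerable.ofNat_encode _
      simp only [ThM, W, Set.mem_setOf_eq, this, Nat.Partrec.Code.eval_curry, hc₀]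
      simp only [Nat.unpair_pair]
      by_cases hφ : Encodable.encode φ = b
      · have hφ' : φ = ⊥ := Encodable.encode_injective (by simpa [hb] using hφ)
        simp [hφ, hφ', hb, Denumerable.ofNat_encode]
      · have hφ' : φ ≠ ⊥ := fun h' => hφ (by simp [h', hb])
        simp [hφ, hφ']
    constructor
    · rintro ⟨M⟩ hdom
      have hbot : (⊥ : Language.ring.Sentence) ∈ ThM (F c) :=
        (hmem ⊥).2 ⟨rfl, hdom⟩
      have := M.is_model.realize_of_mem _ hbot
      simp [FirstOrder.Language.Sentence.Realize] at this
    · intro hdom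
      have hempty : ThM (F c) = ∅ := by
        ext φ
        simp [hmem φ, hdom]
      rw [hempty]
      let _ := FirstOrder.Ring.compatibleRingOfRing ℤ
      have : (ℤ ⊨ (∅ : Language.ring.Theory)) := ⟨fun _ h => absurd h (Set.notMem_empty _)⟩
      exact Theory.Model.isSatisfiable ℤ
  -- conclude halting problem computability
  have : ComputablePred fun c : Nat.Partrec.Code => (c.eval 0).Dom := by
    obtain ⟨f, hf, hfe⟩ := ComputablePred.computable_iff.1 h
    have h1 : ComputablePred fun c : Nat.Partrec.Code => (ThM (F c)).IsSatisfiable :=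
      ComputablePred.computable_iff.2 ⟨fun c => f (F c), hf.comp hF, by
        funext c; exact congrFun hfe (F c)⟩
    have h2 := h1.not
    exact h2.of_eq fun c => by rw [key c, not_not]
  exact ComputablePred.halting_problem 0 this
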